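/- arXiv:2311.16086 — 6 statements merged into one kernel-verified Lean document; each statement's English description precedes it below -/
import Mathlib

section
/- If f is L_f-smooth, S is a random d×d matrix with E[S] = I and λ_max(E[SᵀS]) = L_D finite, then f̃(x) = E[f(s + S(x-s))] satisfies f̃(x+h) ≤ f̃(x) + ⟨∇f̃(x), h⟩ + (L_D L_f / 2)‖h‖² for all x, h. -/
open MeasureTheory Matrix
open scoped RealInnerProductSpace

/-- If `f` is `L_f`-smooth (with gradient `g`), `S` a random matrix with
`E[S] = I` and `λ_max(E[SᵀS]) ≤ L_D` (encoded via the quadratic form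
`E[‖S v‖²] ≤ L_D ‖v‖²`), then `f̃(x) = E[f(s + S(x-s))]` satisfies
`f̃(x+h) ≤ f̃(x) + ⟪∇f̃(x), h⟫ + (L_D L_f/2)‖h‖²`, where
`∇f̃(x) = E[Sᵀ ∇f(s + S(x-s))]`. -/
theorem mast_tilde_smooth {d : ℕ} {Ω : Type*} [MeasurableSpace Ω]
    (μ : Measure Ω) [IsProbabilityMeasure μ]
    (f : EuclideanSpace ℝ (Fin d) → ℝ)
    (g : EuclideanSpace ℝ (Fin d) → EuclideanSpace ℝ (Fin d))
    (Lf LD : ℝ) (hLf : 0 < Lf)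
    (hsmooth : ∀ x h : EuclideanSpace ℝ (Fin d),
      f (x + h) ≤ f x + ⟪g x, h⟫ + Lf / 2 * ‖h‖ ^ 2)
    (S : Ω → Matrix (Fin d) (Fin d) ℝ)
    (hS_int : ∀ i j, Integrable (fun ω => S ω i j) μ)
    (hS_mean : ∀ i j, (∫ ω, S ω i j ∂μ) = (1 : Matrix (Fin d) (Fin d) ℝ) i j)
    (hSS_int : ∀ v : EuclideanSpace ℝ (Fin d),
      Integrable (fun ω => ‖Matrix.toEuclideanLin (S ω) v‖ ^ 2) μ)
    (hLD : ∀ v : EuclideanSpace ℝ (Fin d),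
      (∫ ω, ‖Matrix.toEuclideanLin (S ω) v‖ ^ 2 ∂μ) ≤ LD * ‖v‖ ^ 2)
    (s : EuclideanSpace ℝ (Fin d))
    (hf_int : ∀ x : EuclideanSpace ℝ (Fin d),
      Integrable (fun ω => f (s + Matrix.toEuclideanLin (S ω) (x - s))) μ)
    (hg_int : ∀ x : EuclideanSpace ℝ (Fin d),
      Integrable (fun ω =>
        Matrix.toEuclideanLin (S ω)ᵀ (g (s + Matrix.toEuclideanLin (S ω) (x - s)))) μ) :
    ∀ x h : EuclideanSpace ℝ (Fin d),
      (∫ ω, f (s + Matrix.toEuclideanLin (S ω) (x + h - s)) ∂μ) ≤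
        (∫ ω, f (s + Matrix.toEuclideanLin (S ω) (x - s)) ∂μ)
        + ⟪∫ ω, Matrix.toEuclideanLin (S ω)ᵀ
            (g (s + Matrix.toEuclideanLin (S ω) (x - s))) ∂μ, h⟫
        + LD * Lf / 2 * ‖h‖ ^ 2 := by
  intro x h
  have hadj : ∀ ω (v w : EuclideanSpace ℝ (Fin d)),
      ⟪Matrix.toEuclideanLin (S ω)ᵀ v, w⟫ = ⟪v, Matrix.toEuclideanLin (S ω) w⟫ := by
    intro ω v w
    have ht : (S ω)ᵀ = (S ω)ᴴ := (Matrix.conjTranspose_eq_transpose_of_trivial (S ω)).symm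
    rw [ht, Matrix.toEuclideanLin_conjTranspose_eq_adjoint, LinearMap.adjoint_inner_left]
  have hpt : ∀ ω, f (s + Matrix.toEuclideanLin (S ω) (x + h - s)) ≤
      f (s + Matrix.toEuclideanLin (S ω) (x - s))
        + ⟪Matrix.toEuclideanLin (S ω)ᵀ (g (s + Matrix.toEuclideanLin (S ω) (x - s))), h⟫
        + Lf / 2 * ‖Matrix.toEuclideanLin (S ω) h‖ ^ 2 := by
    intro ω
    have hTadd : Matrix.toEuclideanLin (S ω) (x + h - s)
        = Matrix.toEuclideanLin (S ω) (x - s) + Matrix.toEuclideanLin (S ω) h := by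
      have : x + h - s = (x - s) + h := by abel
      rw [this, map_add]
    have := hsmooth (s + Matrix.toEuclideanLin (S ω) (x - s)) (Matrix.toEuclideanLin (S ω) h)
    rw [hTadd, ← add_assoc, hadj]
    exact this
  have hinner_int : Integrable (fun ω =>
      ⟪Matrix.toEuclideanLin (S ω)ᵀ (g (s + Matrix.toEuclideanLin (S ω) (x - s))), h⟫) μ := by
    have h1 := ContinuousLinearMap.integrable_comp (innerSL ℝ h) (hg_int x)
    exact h1.congr (Filter.Eventually.of_forall fun ω => by
      simp only [ContinuousLinearMap.coe_comp', Function.comp_apply, innerSL_apply_apply]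
      exact real_inner_comm _ _)
  have hsq_int : Integrable (fun ω => Lf / 2 * ‖Matrix.toEuclideanLin (S ω) h‖ ^ 2) μ :=
    (hSS_int h).const_mul _
  have hLHS_int : Integrable (fun ω => f (s + Matrix.toEuclideanLin (S ω) (x + h - s))) μ := by
    have := hf_int (x + h)
    simpa using this
  have step1 : (∫ ω, f (s + Matrix.toEuclideanLin (S ω) (x + h - s)) ∂μ) ≤
      ∫ ω, (f (s + Matrix.toEuclideanLin (S ω) (x - s))
        + ⟪Matrix.toEuclideanLin (S ω)ᵀ (g (s + Matrix.toEuclideanLin (S ω) (x - s))), h⟫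
        + Lf / 2 * ‖Matrix.toEuclideanLin (S ω) h‖ ^ 2) ∂μ :=
    integral_mono hLHS_int (((hf_int x).add hinner_int).add hsq_int) hpt
  have e1 := integral_add ((hf_int x).add hinner_int) hsq_int
  have e2 := integral_add (hf_int x) hinner_int
  simp only [Pi.add_apply] at e1
  rw [e2] at e1
  rw [e1] at step1
  have hin : (∫ ω, ⟪Matrix.toEuclideanLin (S ω)ᵀ
        (g (s + Matrix.toEuclideanLin (S ω) (x - s))), h⟫ ∂μ)
      = ⟪∫ ω, Matrix.toEuclideanLin (S ω)ᵀ
          (g (s + Matrix.toEuclideanLin (S ω) (x - s))) ∂μ, h⟫ := by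
    calc (∫ ω, ⟪Matrix.toEuclideanLin (S ω)ᵀ
            (g (s + Matrix.toEuclideanLin (S ω) (x - s))), h⟫ ∂μ)
        = ∫ ω, ⟪h, Matrix.toEuclideanLin (S ω)ᵀ
            (g (s + Matrix.toEuclideanLin (S ω) (x - s)))⟫ ∂μ :=
          integral_congr_ae (Filter.Eventually.of_forall fun ω => real_inner_comm _ _)
      _ = ⟪h, ∫ ω, Matrix.toEuclideanLin (S ω)ᵀ
            (g (s + Matrix.toEuclideanLin (S ω) (x - s))) ∂μ⟫ :=
          integral_inner (hg_int x) h
      _ = _ := real_inner_comm _ _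
  rw [hin] at step1
  have hq : (∫ ω, Lf / 2 * ‖Matrix.toEuclideanLin (S ω) h‖ ^ 2 ∂μ) ≤ LD * Lf / 2 * ‖h‖ ^ 2 := by
    rw [MeasureTheory.integral_const_mul]
    calc Lf / 2 * ∫ ω, ‖Matrix.toEuclideanLin (S ω) h‖ ^ 2 ∂μ
        ≤ Lf / 2 * (LD * ‖h‖ ^ 2) :=
          mul_le_mul_of_nonneg_left (hLD h) (by positivity)
      _ = LD * Lf / 2 * ‖h‖ ^ 2 := by ring
  linarith
end

section
/- If f is L_f-smooth, S is a random d×d matrix with E[S] = I and L_D = λ_max(E[SᵀS]), then f̃(x) ≤ f(x) + ((L_D − 1) L_f / 2)‖x − s‖² for all x ∈ ℝ^d. -/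
open MeasureTheory Matrix
open scoped RealInnerProductSpace

/-- If `f` is `L_f`-smooth (with gradient `g`), `S` is a random matrix
with `E[S] = I` and `λ_max(E[SᵀS]) ≤ L_D` (quadratic-form encoding), then
`f̃(x) = E[f(s + S(x-s))] ≤ f(x) + ((L_D - 1) L_f / 2) ‖x - s‖²` for all `x`. -/
theorem mast_tilde_upper {d : ℕ} {Ω : Type*} [MeasurableSpace Ω]
    (μ : Measure Ω) [IsProbabilityMeasure μ]
    (f : EuclideanSpace ℝ (Fin d) → ℝ)
    (g : EuclideanSpace ℝ (Fin d) → EuclideanSpace ℝ (Fin d))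
    (Lf LD : ℝ) (hLf : 0 < Lf)
    (hsmooth : ∀ x h : EuclideanSpace ℝ (Fin d),
      f (x + h) ≤ f x + ⟪g x, h⟫ + Lf / 2 * ‖h‖ ^ 2)
    (S : Ω → Matrix (Fin d) (Fin d) ℝ)
    (hS_int : ∀ i j, Integrable (fun ω => S ω i j) μ)
    (hS_mean : ∀ i j, (∫ ω, S ω i j ∂μ) = (1 : Matrix (Fin d) (Fin d) ℝ) i j)
    (hSS_int : ∀ v : EuclideanSpace ℝ (Fin d),
      Integrable (fun ω => ‖Matrix.toEuclideanLin (S ω) v‖ ^ 2) μ)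
    (hLD : ∀ v : EuclideanSpace ℝ (Fin d),
      (∫ ω, ‖Matrix.toEuclideanLin (S ω) v‖ ^ 2 ∂μ) ≤ LD * ‖v‖ ^ 2)
    (s : EuclideanSpace ℝ (Fin d))
    (hf_int : ∀ x : EuclideanSpace ℝ (Fin d),
      Integrable (fun ω => f (s + Matrix.toEuclideanLin (S ω) (x - s))) μ) :
    ∀ x : EuclideanSpace ℝ (Fin d),
      (∫ ω, f (s + Matrix.toEuclideanLin (S ω) (x - s)) ∂μ) ≤
        f x + (LD - 1) * Lf / 2 * ‖x - s‖ ^ 2 := by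
  intro x
  set v : EuclideanSpace ℝ (Fin d) := x - s with hv
  set T : Ω → EuclideanSpace ℝ (Fin d) := fun ω => Matrix.toEuclideanLin (S ω) v with hT
  have hTcoord : ∀ ω i, T ω i = ∑ j, S ω i j * v j := by
    intro ω i
    simp [hT, Matrix.toEuclideanLin_apply, Matrix.mulVec, dotProduct]
  have hinner_eq : ∀ (w : EuclideanSpace ℝ (Fin d)) ω,
      ⟪w, T ω⟫ = ∑ i, ∑ j, (w i * v j) * S ω i j := by
    intro w ω
    rw [PiLp.inner_apply]
    refine Finset.sum_congr rfl fun i _ => ?_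
    rw [RCLike.inner_apply, conj_trivial, hTcoord, Finset.sum_mul]
    exact Finset.sum_congr rfl fun j _ => by ring
  have hterm_int : ∀ (w : EuclideanSpace ℝ (Fin d)) i,
      Integrable (fun ω => ∑ j, (w i * v j) * S ω i j) μ :=
    fun w i => integrable_finset_sum _ fun j _ => (hS_int i j).const_mul _
  have hinner_int : ∀ w : EuclideanSpace ℝ (Fin d),
      Integrable (fun ω => ⟪w, T ω⟫) μ := by
    intro w
    have : (fun ω => ⟪w, T ω⟫) = fun ω => ∑ i, ∑ j, (w i * v j) * S ω i j :=
      funext (hinner_eq w)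
    rw [this]
    exact integrable_finset_sum _ (fun i _ => hterm_int w i)
  have hinner_val : ∀ w : EuclideanSpace ℝ (Fin d),
      (∫ ω, ⟪w, T ω⟫ ∂μ) = ⟪w, v⟫ := by
    intro w
    have h0 : (fun ω => ⟪w, T ω⟫) = fun ω => ∑ i, ∑ j, (w i * v j) * S ω i j :=
      funext (hinner_eq w)
    rw [h0, integral_finset_sum _ (fun i _ => hterm_int w i)]
    have h2 : ∀ i ∈ Finset.univ, (∫ ω, ∑ j, (w i * v j) * S ω i j ∂μ) = w i * v i := by
      intro i _
      rw [integral_finset_sum _ fun j _ => (hS_int i j).const_mul _]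
      have h3 : ∀ j ∈ Finset.univ, (∫ ω, (w i * v j) * S ω i j ∂μ)
          = (w i * v j) * ((1 : Matrix (Fin d) (Fin d) ℝ) i j) := by
        intro j _
        rw [integral_const_mul, hS_mean i j]
      rw [Finset.sum_congr rfl h3]
      simp [Matrix.one_apply]
    rw [Finset.sum_congr rfl h2, PiLp.inner_apply]
    simp
    exact Finset.sum_congr rfl fun i _ => mul_comm _ _
  have hsq : ∀ ω, ‖T ω - v‖ ^ 2 = ‖T ω‖ ^ 2 - 2 * ⟪v, T ω⟫ + ‖v‖ ^ 2 := by
    intro ω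
    rw [norm_sub_sq_real, real_inner_comm]
  have hA : Integrable (fun ω => ‖T ω‖ ^ 2 - 2 * ⟪v, T ω⟫) μ :=
    (hSS_int v).sub ((hinner_int v).const_mul 2)
  have hA' : Integrable (fun ω => ‖T ω‖ ^ 2 - 2 * ⟪v, T ω⟫ + ‖v‖ ^ 2) μ :=
    hA.add (integrable_const _)
  have hsq_int : Integrable (fun ω => ‖T ω - v‖ ^ 2) μ := by
    have : (fun ω => ‖T ω - v‖ ^ 2)
        = fun ω => ‖T ω‖ ^ 2 - 2 * ⟪v, T ω⟫ + ‖v‖ ^ 2 := funext hsq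
    rw [this]; exact hA'
  have hsq_val : (∫ ω, ‖T ω - v‖ ^ 2 ∂μ) ≤ (LD - 1) * ‖v‖ ^ 2 := by
    have heq : (∫ ω, ‖T ω - v‖ ^ 2 ∂μ)
        = (∫ ω, ‖T ω‖ ^ 2 ∂μ) - 2 * ‖v‖ ^ 2 + ‖v‖ ^ 2 := by
      rw [show (fun ω => ‖T ω - v‖ ^ 2)
          = fun ω => ‖T ω‖ ^ 2 - 2 * ⟪v, T ω⟫ + ‖v‖ ^ 2 from funext hsq]
      rw [integral_add hA (integrable_const _),
        integral_sub (hSS_int v) ((hinner_int v).const_mul 2),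
        integral_const_mul, hinner_val v, real_inner_self_eq_norm_sq]
      simp
      rfl
    rw [heq]
    have := hLD v
    nlinarith [sq_nonneg ‖v‖]
  have hpt : ∀ ω, f (s + T ω) ≤ f x + ⟪g x, T ω - v⟫ + Lf / 2 * ‖T ω - v‖ ^ 2 := by
    intro ω
    have hx : s + T ω = x + (T ω - v) := by rw [hv]; abel
    rw [hx]; exact hsmooth x (T ω - v)
  have h1 : (fun ω => ⟪g x, T ω - v⟫) = fun ω => ⟪g x, T ω⟫ - ⟪g x, v⟫ := by
    funext ω; rw [inner_sub_right]
  have hB : Integrable (fun ω => ⟪g x, T ω - v⟫) μ := by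
    rw [h1]; exact (hinner_int (g x)).sub (integrable_const _)
  have hC : Integrable (fun ω => f x + ⟪g x, T ω - v⟫) μ :=
    (integrable_const _).add hB
  have hint_rhs : Integrable
      (fun ω => f x + ⟪g x, T ω - v⟫ + Lf / 2 * ‖T ω - v‖ ^ 2) μ :=
    hC.add (hsq_int.const_mul _)
  have hmono := integral_mono (hf_int x) hint_rhs hpt
  have hval : (∫ ω, (f x + ⟪g x, T ω - v⟫ + Lf / 2 * ‖T ω - v‖ ^ 2) ∂μ)
      = f x + Lf / 2 * (∫ ω, ‖T ω - v‖ ^ 2 ∂μ) := by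
    rw [integral_add hC (hsq_int.const_mul _), integral_add (integrable_const _) hB,
      integral_const_mul]
    have : (∫ ω, ⟪g x, T ω - v⟫ ∂μ) = 0 := by
      rw [h1, integral_sub (hinner_int (g x)) (integrable_const _), hinner_val (g x)]
      simp
    rw [this]
    simp
  rw [hval] at hmono
  have hfinal : f x + Lf / 2 * (∫ ω, ‖T ω - v‖ ^ 2 ∂μ)
      ≤ f x + (LD - 1) * Lf / 2 * ‖v‖ ^ 2 := by nlinarith
  exact le_trans hmono hfinal
end

section
/- If f is μ_f-strongly convex, S is a random matrix with E[S] = I and μ_D = λ_min(E[SᵀS]), then f̃(x) = E[f(s + S(x−s))] is μ_D μ_f-strongly convex: f̃(x+h) ≥ f̃(x) + ⟨∇f̃(x), h⟩ + (μ_D μ_f/2)‖h‖². -/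
open MeasureTheory Matrix
open scoped RealInnerProductSpace

/-- If `f` is `μ_f`-strongly convex (with gradient `g`), `S` is a random
matrix with `E[S] = I` and `λ_min(E[SᵀS]) ≥ μ_D` (quadratic-form encoding
`μ_D ‖v‖² ≤ E[‖S v‖²]`), then `f̃(x) = E[f(s + S(x-s))]` is `μ_D μ_f`-strongly
convex, with `∇f̃(x) = E[Sᵀ ∇f(s + S(x-s))]`. -/
theorem mast_tilde_strongly_convex {d : ℕ} {Ω : Type*} [MeasurableSpace Ω]
    (μ : Measure Ω) [IsProbabilityMeasure μ]
    (f : EuclideanSpace ℝ (Fin d) → ℝ)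
    (g : EuclideanSpace ℝ (Fin d) → EuclideanSpace ℝ (Fin d))
    (μf μD : ℝ) (hμf : 0 < μf)
    (hconv : ∀ x h : EuclideanSpace ℝ (Fin d),
      f (x + h) ≥ f x + ⟪g x, h⟫ + μf / 2 * ‖h‖ ^ 2)
    (S : Ω → Matrix (Fin d) (Fin d) ℝ)
    (hS_int : ∀ i j, Integrable (fun ω => S ω i j) μ)
    (hS_mean : ∀ i j, (∫ ω, S ω i j ∂μ) = (1 : Matrix (Fin d) (Fin d) ℝ) i j)
    (hSS_int : ∀ v : EuclideanSpace ℝ (Fin d),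
      Integrable (fun ω => ‖Matrix.toEuclideanLin (S ω) v‖ ^ 2) μ)
    (hμD : ∀ v : EuclideanSpace ℝ (Fin d),
      μD * ‖v‖ ^ 2 ≤ ∫ ω, ‖Matrix.toEuclideanLin (S ω) v‖ ^ 2 ∂μ)
    (s : EuclideanSpace ℝ (Fin d))
    (hf_int : ∀ x : EuclideanSpace ℝ (Fin d),
      Integrable (fun ω => f (s + Matrix.toEuclideanLin (S ω) (x - s))) μ)
    (hg_int : ∀ x : EuclideanSpace ℝ (Fin d),
      Integrable (fun ω =>
        Matrix.toEuclideanLin (S ω)ᵀ (g (s + Matrix.toEuclideanLin (S ω) (x - s)))) μ) :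
    ∀ x h : EuclideanSpace ℝ (Fin d),
      (∫ ω, f (s + Matrix.toEuclideanLin (S ω) (x + h - s)) ∂μ) ≥
        (∫ ω, f (s + Matrix.toEuclideanLin (S ω) (x - s)) ∂μ)
        + ⟪∫ ω, Matrix.toEuclideanLin (S ω)ᵀ
            (g (s + Matrix.toEuclideanLin (S ω) (x - s))) ∂μ, h⟫
        + μD * μf / 2 * ‖h‖ ^ 2 := by
  intro x h
  have hadj : ∀ ω, ⟪Matrix.toEuclideanLin (S ω)ᵀ
      (g (s + Matrix.toEuclideanLin (S ω) (x - s))), h⟫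
      = ⟪g (s + Matrix.toEuclideanLin (S ω) (x - s)),
          Matrix.toEuclideanLin (S ω) h⟫ := by
    intro ω
    have hc : (S ω)ᵀ = (S ω)ᴴ := (Matrix.conjTranspose_eq_transpose_of_trivial _).symm
    rw [hc, Matrix.toEuclideanLin_conjTranspose_eq_adjoint,
      LinearMap.adjoint_inner_left]
  have hpt : ∀ ω, f (s + Matrix.toEuclideanLin (S ω) (x - s))
      + ⟪Matrix.toEuclideanLin (S ω)ᵀ (g (s + Matrix.toEuclideanLin (S ω) (x - s))), h⟫
      + μf / 2 * ‖Matrix.toEuclideanLin (S ω) h‖ ^ 2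
      ≤ f (s + Matrix.toEuclideanLin (S ω) (x + h - s)) := by
    intro ω
    have hx : s + Matrix.toEuclideanLin (S ω) (x + h - s)
        = (s + Matrix.toEuclideanLin (S ω) (x - s)) + Matrix.toEuclideanLin (S ω) h := by
      have hxs : x + h - s = (x - s) + h := by abel
      rw [hxs, map_add]; abel
    rw [hx, hadj ω]
    exact hconv _ _
  have hinner_int : Integrable (fun ω => ⟪Matrix.toEuclideanLin (S ω)ᵀ
      (g (s + Matrix.toEuclideanLin (S ω) (x - s))), h⟫) μ := by
    have h1 : Integrable (fun ω => ⟪h, Matrix.toEuclideanLin (S ω)ᵀ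
        (g (s + Matrix.toEuclideanLin (S ω) (x - s)))⟫) μ := by
      have := (innerSL ℝ h).integrable_comp (hg_int x)
      simpa only [innerSL_apply_apply, Function.comp] using this
    exact h1.congr (Filter.Eventually.of_forall fun ω => real_inner_comm _ _)
  have hC : Integrable (fun ω =>
      μf / 2 * ‖Matrix.toEuclideanLin (S ω) h‖ ^ 2) μ := (hSS_int h).const_mul _
  have hmono : (∫ ω, (f (s + Matrix.toEuclideanLin (S ω) (x - s))
      + ⟪Matrix.toEuclideanLin (S ω)ᵀ (g (s + Matrix.toEuclideanLin (S ω) (x - s))), h⟫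
      + μf / 2 * ‖Matrix.toEuclideanLin (S ω) h‖ ^ 2) ∂μ)
      ≤ ∫ ω, f (s + Matrix.toEuclideanLin (S ω) (x + h - s)) ∂μ :=
    integral_mono (((hf_int x).add hinner_int).add hC) (hf_int (x + h)) hpt
  have e1 := integral_add ((hf_int x).add hinner_int) hC
  have e2 := integral_add (hf_int x) hinner_int
  have e3 : (∫ ω, μf / 2 * ‖Matrix.toEuclideanLin (S ω) h‖ ^ 2 ∂μ)
      = μf / 2 * ∫ ω, ‖Matrix.toEuclideanLin (S ω) h‖ ^ 2 ∂μ := integral_const_mul _ _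
  have hinner_eq : (∫ ω, ⟪Matrix.toEuclideanLin (S ω)ᵀ
      (g (s + Matrix.toEuclideanLin (S ω) (x - s))), h⟫ ∂μ)
      = ⟪∫ ω, Matrix.toEuclideanLin (S ω)ᵀ
          (g (s + Matrix.toEuclideanLin (S ω) (x - s))) ∂μ, h⟫ := by
    have hfe : (fun ω => ⟪Matrix.toEuclideanLin (S ω)ᵀ
        (g (s + Matrix.toEuclideanLin (S ω) (x - s))), h⟫)
        = fun ω => ⟪h, Matrix.toEuclideanLin (S ω)ᵀ
            (g (s + Matrix.toEuclideanLin (S ω) (x - s)))⟫ :=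
      funext fun ω => real_inner_comm _ _
    rw [hfe, integral_inner (hg_int x), real_inner_comm]
  have hquad : μf / 2 * (μD * ‖h‖ ^ 2)
      ≤ μf / 2 * ∫ ω, ‖Matrix.toEuclideanLin (S ω) h‖ ^ 2 ∂μ :=
    mul_le_mul_of_nonneg_left (hμD h) (by linarith)
  have hrw : μD * μf / 2 * ‖h‖ ^ 2 = μf / 2 * (μD * ‖h‖ ^ 2) := by ring
  simp only [Pi.add_apply] at e1
  rw [e1, e2, e3, hinner_eq] at hmono
  linarith
end

section
/- If f is μ_f-strongly convex, S is a random matrix with E[S] = I and μ_D = λ_min(E[SᵀS]), then f̃(x) ≥ f(x) + ((μ_D − 1)μ_f / 2)‖x − s‖² for all x. -/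
open MeasureTheory Matrix
open scoped RealInnerProductSpace

/-- If `f` is `μ_f`-strongly convex (with gradient `g`), `S` a random
matrix with `E[S] = I` and `λ_min(E[SᵀS]) ≥ μ_D` (quadratic-form encoding), then
`f̃(x) = E[f(s + S(x-s))] ≥ f(x) + ((μ_D - 1) μ_f / 2) ‖x - s‖²` for all `x`. -/
theorem mast_tilde_lower {d : ℕ} {Ω : Type*} [MeasurableSpace Ω]
    (μ : Measure Ω) [IsProbabilityMeasure μ]
    (f : EuclideanSpace ℝ (Fin d) → ℝ)
    (g : EuclideanSpace ℝ (Fin d) → EuclideanSpace ℝ (Fin d))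
    (μf μD : ℝ) (hμf : 0 < μf)
    (hconv : ∀ x h : EuclideanSpace ℝ (Fin d),
      f (x + h) ≥ f x + ⟪g x, h⟫ + μf / 2 * ‖h‖ ^ 2)
    (S : Ω → Matrix (Fin d) (Fin d) ℝ)
    (hS_int : ∀ i j, Integrable (fun ω => S ω i j) μ)
    (hS_mean : ∀ i j, (∫ ω, S ω i j ∂μ) = (1 : Matrix (Fin d) (Fin d) ℝ) i j)
    (hSS_int : ∀ v : EuclideanSpace ℝ (Fin d),
      Integrable (fun ω => ‖Matrix.toEuclideanLin (S ω) v‖ ^ 2) μ)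
    (hμD : ∀ v : EuclideanSpace ℝ (Fin d),
      μD * ‖v‖ ^ 2 ≤ ∫ ω, ‖Matrix.toEuclideanLin (S ω) v‖ ^ 2 ∂μ)
    (s : EuclideanSpace ℝ (Fin d))
    (hf_int : ∀ x : EuclideanSpace ℝ (Fin d),
      Integrable (fun ω => f (s + Matrix.toEuclideanLin (S ω) (x - s))) μ) :
    ∀ x : EuclideanSpace ℝ (Fin d),
      (∫ ω, f (s + Matrix.toEuclideanLin (S ω) (x - s)) ∂μ) ≥
        f x + (μD - 1) * μf / 2 * ‖x - s‖ ^ 2 := by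
  intro x
  set v : EuclideanSpace ℝ (Fin d) := x - s with hv
  have hlin : ∀ (M : Matrix (Fin d) (Fin d) ℝ) (i : Fin d),
      Matrix.toEuclideanLin M v i = ∑ j, M i j * v j := by
    intro M i
    simp [Matrix.toEuclideanLin, Matrix.toLin'_apply, Matrix.mulVec, dotProduct]
  have hinner : ∀ (w : EuclideanSpace ℝ (Fin d)) (M : Matrix (Fin d) (Fin d) ℝ),
      (⟪w, Matrix.toEuclideanLin M v⟫ : ℝ) = ∑ i, ∑ j, w i * (M i j * v j) := by
    intro w M
    simp [PiLp.inner_apply, hlin, Finset.mul_sum]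
    refine Finset.sum_congr rfl fun i _ => ?_
    rw [Finset.sum_mul]
    exact Finset.sum_congr rfl fun j _ => by ring
  have hInt : ∀ w : EuclideanSpace ℝ (Fin d),
      Integrable (fun ω => (⟪w, Matrix.toEuclideanLin (S ω) v⟫ : ℝ)) μ := by
    intro w
    simp only [hinner]
    exact integrable_finset_sum _ (fun i _ => integrable_finset_sum _
      (fun j _ => ((hS_int i j).mul_const _).const_mul _))
  have hIntVal : ∀ w : EuclideanSpace ℝ (Fin d),
      (∫ ω, (⟪w, Matrix.toEuclideanLin (S ω) v⟫ : ℝ) ∂μ) = ⟪w, v⟫ := by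
    intro w
    simp only [hinner]
    rw [integral_finset_sum _ (fun i _ => integrable_finset_sum _
      (fun j _ => ((hS_int i j).mul_const _).const_mul _))]
    have key : ∀ i : Fin d, (∫ ω, ∑ j, w i * (S ω i j * v j) ∂μ) = w i * v i := by
      intro i
      rw [integral_finset_sum _ (fun j _ => ((hS_int i j).mul_const _).const_mul _)]
      have : ∀ j : Fin d, (∫ ω, w i * (S ω i j * v j) ∂μ)
          = w i * ((1 : Matrix (Fin d) (Fin d) ℝ) i j * v j) := by
        intro j
        rw [integral_const_mul, integral_mul_const, hS_mean]
      simp [this, Matrix.one_apply]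
    simp [key, PiLp.inner_apply]
    exact Finset.sum_congr rfl fun i _ => mul_comm _ _
  -- pointwise bound from strong convexity
  have hpt : ∀ ω, f x + ⟪g x, Matrix.toEuclideanLin (S ω) v - v⟫
      + μf / 2 * ‖Matrix.toEuclideanLin (S ω) v - v‖ ^ 2
      ≤ f (s + Matrix.toEuclideanLin (S ω) v) := by
    intro ω
    have h := hconv x (Matrix.toEuclideanLin (S ω) v - v)
    have hx : x + (Matrix.toEuclideanLin (S ω) v - v) = s + Matrix.toEuclideanLin (S ω) v := by
      rw [hv]; abel
    rw [hx] at h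
    exact h
  set c0 : ℝ := f x - ⟪g x, v⟫ + μf / 2 * ‖v‖ ^ 2 with hc0
  have hexp : ∀ ω, f x + ⟪g x, Matrix.toEuclideanLin (S ω) v - v⟫
      + μf / 2 * ‖Matrix.toEuclideanLin (S ω) v - v‖ ^ 2
      = c0 + ⟪g x, Matrix.toEuclideanLin (S ω) v⟫
        + μf / 2 * ‖Matrix.toEuclideanLin (S ω) v‖ ^ 2
        + (-μf) * ⟪v, Matrix.toEuclideanLin (S ω) v⟫ := by
    intro ω
    rw [inner_sub_right, norm_sub_sq_real,
      real_inner_comm (Matrix.toEuclideanLin (S ω) v) v]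
    ring
  have hIntRHS : Integrable (fun ω => c0 + ⟪g x, Matrix.toEuclideanLin (S ω) v⟫
        + μf / 2 * ‖Matrix.toEuclideanLin (S ω) v‖ ^ 2
        + (-μf) * ⟪v, Matrix.toEuclideanLin (S ω) v⟫) μ :=
    (((integrable_const c0).add (hInt (g x))).add ((hSS_int v).const_mul _)).add
      ((hInt v).const_mul _)
  have hmono : (∫ ω, (c0 + ⟪g x, Matrix.toEuclideanLin (S ω) v⟫
        + μf / 2 * ‖Matrix.toEuclideanLin (S ω) v‖ ^ 2
        + (-μf) * ⟪v, Matrix.toEuclideanLin (S ω) v⟫) ∂μ)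
      ≤ ∫ ω, f (s + Matrix.toEuclideanLin (S ω) v) ∂μ := by
    apply integral_mono hIntRHS (hf_int x)
    intro ω
    dsimp only
    rw [← hexp ω]
    exact hpt ω
  have hval : (∫ ω, (c0 + ⟪g x, Matrix.toEuclideanLin (S ω) v⟫
        + μf / 2 * ‖Matrix.toEuclideanLin (S ω) v‖ ^ 2
        + (-μf) * ⟪v, Matrix.toEuclideanLin (S ω) v⟫) ∂μ)
      = c0 + ⟪g x, v⟫ + μf / 2 * (∫ ω, ‖Matrix.toEuclideanLin (S ω) v‖ ^ 2 ∂μ)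
        + (-μf) * ‖v‖ ^ 2 := by
    have hA : Integrable (fun ω => (⟪g x, Matrix.toEuclideanLin (S ω) v⟫ : ℝ)) μ := hInt (g x)
    have hB : Integrable (fun ω => μf / 2 * ‖Matrix.toEuclideanLin (S ω) v‖ ^ 2) μ :=
      (hSS_int v).const_mul _
    have hC : Integrable (fun ω => (-μf) * (⟪v, Matrix.toEuclideanLin (S ω) v⟫ : ℝ)) μ :=
      (hInt v).const_mul _
    have e1 : (∫ ω, (c0 + ⟪g x, Matrix.toEuclideanLin (S ω) v⟫
          + μf / 2 * ‖Matrix.toEuclideanLin (S ω) v‖ ^ 2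
          + (-μf) * ⟪v, Matrix.toEuclideanLin (S ω) v⟫) ∂μ)
        = (∫ ω, (c0 + ⟪g x, Matrix.toEuclideanLin (S ω) v⟫
          + μf / 2 * ‖Matrix.toEuclideanLin (S ω) v‖ ^ 2) ∂μ)
          + ∫ ω, (-μf) * (⟪v, Matrix.toEuclideanLin (S ω) v⟫ : ℝ) ∂μ :=
      integral_add (((integrable_const c0).add hA).add hB) hC
    have e2 : (∫ ω, (c0 + ⟪g x, Matrix.toEuclideanLin (S ω) v⟫
          + μf / 2 * ‖Matrix.toEuclideanLin (S ω) v‖ ^ 2) ∂μ)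
        = (∫ ω, (c0 + (⟪g x, Matrix.toEuclideanLin (S ω) v⟫ : ℝ)) ∂μ)
          + ∫ ω, μf / 2 * ‖Matrix.toEuclideanLin (S ω) v‖ ^ 2 ∂μ :=
      integral_add ((integrable_const c0).add hA) hB
    have e3 : (∫ ω, (c0 + (⟪g x, Matrix.toEuclideanLin (S ω) v⟫ : ℝ)) ∂μ)
        = (∫ _ω, c0 ∂μ) + ∫ ω, (⟪g x, Matrix.toEuclideanLin (S ω) v⟫ : ℝ) ∂μ :=
      integral_add (integrable_const c0) hA
    rw [e1, e2, e3, integral_const, integral_const_mul, integral_const_mul,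
      hIntVal, hIntVal, real_inner_self_eq_norm_sq]
    simp
  have hE := hμD v
  have hnv : (0:ℝ) ≤ ‖v‖ ^ 2 := sq_nonneg _
  rw [hval] at hmono
  have : f x + (μD - 1) * μf / 2 * ‖v‖ ^ 2
      ≤ c0 + ⟪g x, v⟫ + μf / 2 * (∫ ω, ‖Matrix.toEuclideanLin (S ω) v‖ ^ 2 ∂μ)
        + (-μf) * ‖v‖ ^ 2 := by
    rw [hc0]
    nlinarith [hE, hμf.le]
  exact le_trans this hmono
end

section
/- Let f be L_f-smooth, μ_f-strongly convex, S a random matrix with E[S] = I, L_D = λ_max(E[SᵀS]), μ_D = λ_min(E[SᵀS]). If x* minimizes f and x_D* minimizes f̃(x) = E[f(s + S(x−s))], then f(x*) ≤ f(x_D*) ≤ f(x*) + ((L_D−1)L_f/2)‖x*−s‖² − ((μ_D−1)μ_f/2)‖x_D*−s‖². -/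
open MeasureTheory Matrix
open scoped RealInnerProductSpace

/-- Let `f` be `L_f`-smooth and `μ_f`-strongly convex (with gradient
`g`), `S` a random matrix with `E[S] = I`, `λ_max(E[SᵀS]) ≤ L_D` and
`λ_min(E[SᵀS]) ≥ μ_D` (quadratic-form encodings). If `x*` minimizes `f` and `x_D*`
minimizes `f̃(x) = E[f(s + S(x-s))]`, then
`f(x*) ≤ f(x_D*) ≤ f(x*) + ((L_D-1)L_f/2)‖x*-s‖² - ((μ_D-1)μ_f/2)‖x_D*-s‖²`. -/
theorem mast_minima_relation {d : ℕ} {Ω : Type*} [MeasurableSpace Ω]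
    (μ : Measure Ω) [IsProbabilityMeasure μ]
    (f : EuclideanSpace ℝ (Fin d) → ℝ)
    (g : EuclideanSpace ℝ (Fin d) → EuclideanSpace ℝ (Fin d))
    (Lf μf LD μD : ℝ) (hLf : 0 < Lf) (hμf : 0 < μf)
    (hsmooth : ∀ x h : EuclideanSpace ℝ (Fin d),
      f (x + h) ≤ f x + ⟪g x, h⟫ + Lf / 2 * ‖h‖ ^ 2)
    (hconv : ∀ x h : EuclideanSpace ℝ (Fin d),
      f (x + h) ≥ f x + ⟪g x, h⟫ + μf / 2 * ‖h‖ ^ 2)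
    (S : Ω → Matrix (Fin d) (Fin d) ℝ)
    (hS_int : ∀ i j, Integrable (fun ω => S ω i j) μ)
    (hS_mean : ∀ i j, (∫ ω, S ω i j ∂μ) = (1 : Matrix (Fin d) (Fin d) ℝ) i j)
    (hSS_int : ∀ v : EuclideanSpace ℝ (Fin d),
      Integrable (fun ω => ‖Matrix.toEuclideanLin (S ω) v‖ ^ 2) μ)
    (hLD : ∀ v : EuclideanSpace ℝ (Fin d),
      (∫ ω, ‖Matrix.toEuclideanLin (S ω) v‖ ^ 2 ∂μ) ≤ LD * ‖v‖ ^ 2)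
    (hμD : ∀ v : EuclideanSpace ℝ (Fin d),
      μD * ‖v‖ ^ 2 ≤ ∫ ω, ‖Matrix.toEuclideanLin (S ω) v‖ ^ 2 ∂μ)
    (s : EuclideanSpace ℝ (Fin d))
    (hf_int : ∀ x : EuclideanSpace ℝ (Fin d),
      Integrable (fun ω => f (s + Matrix.toEuclideanLin (S ω) (x - s))) μ)
    (xstar xD : EuclideanSpace ℝ (Fin d))
    (hxstar : ∀ y, f xstar ≤ f y)
    (hxD : ∀ y, (∫ ω, f (s + Matrix.toEuclideanLin (S ω) (xD - s)) ∂μ) ≤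
      ∫ ω, f (s + Matrix.toEuclideanLin (S ω) (y - s)) ∂μ) :
    f xstar ≤ f xD ∧
      f xD ≤ f xstar + (LD - 1) * Lf / 2 * ‖xstar - s‖ ^ 2
        - (μD - 1) * μf / 2 * ‖xD - s‖ ^ 2 := by
  -- expansion of the inner product with a matrix image
  have expand : ∀ (M : Matrix (Fin d) (Fin d) ℝ) (v w : EuclideanSpace ℝ (Fin d)),
      ⟪w, Matrix.toEuclideanLin M v⟫ = ∑ i, ∑ j, (w i * v j) * M i j := by
    intro M v w
    simp only [PiLp.inner_apply, RCLike.inner_apply, conj_trivial,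
      Matrix.toEuclideanLin_apply, Matrix.mulVec,
      dotProduct, Finset.mul_sum, Finset.sum_mul]
    refine Finset.sum_congr rfl fun i _ => Finset.sum_congr rfl fun j _ => ?_
    ring
  have hinner_int : ∀ (v w : EuclideanSpace ℝ (Fin d)),
      Integrable (fun ω => ⟪w, Matrix.toEuclideanLin (S ω) v⟫) μ := by
    intro v w
    have : (fun ω => ⟪w, Matrix.toEuclideanLin (S ω) v⟫)
        = fun ω => ∑ i, ∑ j, (w i * v j) * S ω i j := by
      funext ω; exact expand _ _ _
    rw [this]
    exact integrable_finset_sum _ fun i _ =>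
      integrable_finset_sum _ fun j _ => (hS_int i j).const_mul _
  have hinner_mean : ∀ (v w : EuclideanSpace ℝ (Fin d)),
      (∫ ω, ⟪w, Matrix.toEuclideanLin (S ω) v⟫ ∂μ) = ⟪w, v⟫ := by
    intro v w
    have h1 : (∫ ω, ⟪w, Matrix.toEuclideanLin (S ω) v⟫ ∂μ)
        = ∫ ω, ∑ i, ∑ j, (w i * v j) * S ω i j ∂μ := by
      congr 1; funext ω; exact expand _ _ _
    rw [h1, integral_finset_sum _ fun i _ =>
      integrable_finset_sum _ fun j _ => (hS_int i j).const_mul _]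
    have h2 : ∀ i : Fin d, (∫ ω, ∑ j, (w i * v j) * S ω i j ∂μ)
        = ∑ j, (w i * v j) * (1 : Matrix (Fin d) (Fin d) ℝ) i j := by
      intro i
      rw [integral_finset_sum _ fun j _ => (hS_int i j).const_mul _]
      exact Finset.sum_congr rfl fun j _ => by rw [integral_const_mul, hS_mean i j]
    simp only [h2, Matrix.one_apply, mul_ite, mul_one, mul_zero,
      Finset.sum_ite_eq, Finset.mem_univ, if_true]
    simp [PiLp.inner_apply, RCLike.inner_apply]
    exact Finset.sum_congr rfl fun i _ => mul_comm _ _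
  -- second moment of (S-I)v
  have hdiff_int : ∀ v : EuclideanSpace ℝ (Fin d),
      Integrable (fun ω => ‖Matrix.toEuclideanLin (S ω) v - v‖ ^ 2) μ := by
    intro v
    have : (fun ω => ‖Matrix.toEuclideanLin (S ω) v - v‖ ^ 2)
        = fun ω => ‖Matrix.toEuclideanLin (S ω) v‖ ^ 2
            - 2 * ⟪v, Matrix.toEuclideanLin (S ω) v⟫ + ‖v‖ ^ 2 := by
      funext ω
      rw [norm_sub_sq_real, real_inner_comm]
    rw [this]
    exact (((hSS_int v).sub ((hinner_int v v).const_mul 2)).add (integrable_const _))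
  have hdiff_mean : ∀ v : EuclideanSpace ℝ (Fin d),
      (∫ ω, ‖Matrix.toEuclideanLin (S ω) v - v‖ ^ 2 ∂μ)
        = (∫ ω, ‖Matrix.toEuclideanLin (S ω) v‖ ^ 2 ∂μ) - ‖v‖ ^ 2 := by
    intro v
    have h1 : (∫ ω, ‖Matrix.toEuclideanLin (S ω) v - v‖ ^ 2 ∂μ)
        = ∫ ω, (‖Matrix.toEuclideanLin (S ω) v‖ ^ 2
            - 2 * ⟪v, Matrix.toEuclideanLin (S ω) v⟫ + ‖v‖ ^ 2) ∂μ := by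
      congr 1; funext ω; rw [norm_sub_sq_real, real_inner_comm]
    have hA : Integrable (fun ω => ‖Matrix.toEuclideanLin (S ω) v‖ ^ 2
        - 2 * ⟪v, Matrix.toEuclideanLin (S ω) v⟫) μ :=
      (hSS_int v).sub ((hinner_int v v).const_mul 2)
    have hB : Integrable (fun ω => 2 * ⟪v, Matrix.toEuclideanLin (S ω) v⟫) μ :=
      (hinner_int v v).const_mul 2
    rw [h1, integral_add hA (integrable_const _), integral_sub (hSS_int v) hB,
      integral_const_mul, hinner_mean v v, real_inner_self_eq_norm_sq, integral_const]
    simp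
    ring
  -- shift identity
  have hshift : ∀ (x : EuclideanSpace ℝ (Fin d)) (u : EuclideanSpace ℝ (Fin d)),
      s + u = x + (u - (x - s)) := by
    intro x u; abel
  -- upper bound on f tilde
  have hupper : ∀ x : EuclideanSpace ℝ (Fin d),
      (∫ ω, f (s + Matrix.toEuclideanLin (S ω) (x - s)) ∂μ)
        ≤ f x + (LD - 1) * Lf / 2 * ‖x - s‖ ^ 2 := by
    intro x
    set v := x - s with hv
    have hle : ∀ ω, f (s + Matrix.toEuclideanLin (S ω) v)
        ≤ f x + ⟪g x, Matrix.toEuclideanLin (S ω) v - v⟫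
            + Lf / 2 * ‖Matrix.toEuclideanLin (S ω) v - v‖ ^ 2 := by
      intro ω
      rw [hshift x (Matrix.toEuclideanLin (S ω) v)]
      exact hsmooth x _
    have hint2 : Integrable (fun ω => f x
        + ⟪g x, Matrix.toEuclideanLin (S ω) v - v⟫
        + Lf / 2 * ‖Matrix.toEuclideanLin (S ω) v - v‖ ^ 2) μ := by
      refine ((integrable_const _).add ?_).add ((hdiff_int v).const_mul _)
      have : (fun ω => ⟪g x, Matrix.toEuclideanLin (S ω) v - v⟫)
          = fun ω => ⟪g x, Matrix.toEuclideanLin (S ω) v⟫ - ⟪g x, v⟫ := by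
        funext ω; rw [inner_sub_right]
      rw [this]
      exact (hinner_int v (g x)).sub (integrable_const _)
    have step := integral_mono (hf_int x) hint2 hle
    have heval : (∫ ω, (f x + ⟪g x, Matrix.toEuclideanLin (S ω) v - v⟫
        + Lf / 2 * ‖Matrix.toEuclideanLin (S ω) v - v‖ ^ 2) ∂μ)
        = f x + Lf / 2 * ((∫ ω, ‖Matrix.toEuclideanLin (S ω) v‖ ^ 2 ∂μ) - ‖v‖ ^ 2) := by
      have hib : Integrable (fun ω => ⟪g x, Matrix.toEuclideanLin (S ω) v - v⟫) μ := by
        have : (fun ω => ⟪g x, Matrix.toEuclideanLin (S ω) v - v⟫)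
            = fun ω => ⟪g x, Matrix.toEuclideanLin (S ω) v⟫ - ⟪g x, v⟫ := by
          funext ω; rw [inner_sub_right]
        rw [this]; exact (hinner_int v (g x)).sub (integrable_const _)
      have hA : Integrable (fun ω => f x + ⟪g x, Matrix.toEuclideanLin (S ω) v - v⟫) μ :=
        (integrable_const _).add hib
      have hB : Integrable (fun ω => Lf / 2 * ‖Matrix.toEuclideanLin (S ω) v - v‖ ^ 2) μ :=
        (hdiff_int v).const_mul _
      rw [integral_add hA hB, integral_add (integrable_const _) hib,
        integral_const_mul, hdiff_mean v]
      have : (∫ ω, ⟪g x, Matrix.toEuclideanLin (S ω) v - v⟫ ∂μ) = 0 := by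
        have he : (fun ω => ⟪g x, Matrix.toEuclideanLin (S ω) v - v⟫)
            = fun ω => ⟪g x, Matrix.toEuclideanLin (S ω) v⟫ - ⟪g x, v⟫ := by
          funext ω; rw [inner_sub_right]
        rw [he, integral_sub (hinner_int v (g x)) (integrable_const _),
          hinner_mean v (g x), integral_const]
        simp
      rw [this]
      simp
    rw [heval] at step
    have hbd : Lf / 2 * ((∫ ω, ‖Matrix.toEuclideanLin (S ω) v‖ ^ 2 ∂μ) - ‖v‖ ^ 2)
        ≤ (LD - 1) * Lf / 2 * ‖v‖ ^ 2 := by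
      have := hLD v
      nlinarith [this, hLf.le]
    linarith
  -- lower bound on f tilde
  have hlower : ∀ x : EuclideanSpace ℝ (Fin d),
      f x + (μD - 1) * μf / 2 * ‖x - s‖ ^ 2
        ≤ ∫ ω, f (s + Matrix.toEuclideanLin (S ω) (x - s)) ∂μ := by
    intro x
    set v := x - s with hv
    have hle : ∀ ω, f x + ⟪g x, Matrix.toEuclideanLin (S ω) v - v⟫
            + μf / 2 * ‖Matrix.toEuclideanLin (S ω) v - v‖ ^ 2
        ≤ f (s + Matrix.toEuclideanLin (S ω) v) := by
      intro ω
      rw [hshift x (Matrix.toEuclideanLin (S ω) v)]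
      exact hconv x _
    have hib : Integrable (fun ω => ⟪g x, Matrix.toEuclideanLin (S ω) v - v⟫) μ := by
      have : (fun ω => ⟪g x, Matrix.toEuclideanLin (S ω) v - v⟫)
          = fun ω => ⟪g x, Matrix.toEuclideanLin (S ω) v⟫ - ⟪g x, v⟫ := by
        funext ω; rw [inner_sub_right]
      rw [this]; exact (hinner_int v (g x)).sub (integrable_const _)
    have hint2 : Integrable (fun ω => f x
        + ⟪g x, Matrix.toEuclideanLin (S ω) v - v⟫
        + μf / 2 * ‖Matrix.toEuclideanLin (S ω) v - v‖ ^ 2) μ :=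
      ((integrable_const _).add hib).add ((hdiff_int v).const_mul _)
    have step := integral_mono hint2 (hf_int x) hle
    have heval : (∫ ω, (f x + ⟪g x, Matrix.toEuclideanLin (S ω) v - v⟫
        + μf / 2 * ‖Matrix.toEuclideanLin (S ω) v - v‖ ^ 2) ∂μ)
        = f x + μf / 2 * ((∫ ω, ‖Matrix.toEuclideanLin (S ω) v‖ ^ 2 ∂μ) - ‖v‖ ^ 2) := by
      have hA : Integrable (fun ω => f x + ⟪g x, Matrix.toEuclideanLin (S ω) v - v⟫) μ :=
        (integrable_const _).add hib
      have hB : Integrable (fun ω => μf / 2 * ‖Matrix.toEuclideanLin (S ω) v - v‖ ^ 2) μ :=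
        (hdiff_int v).const_mul _
      rw [integral_add hA hB, integral_add (integrable_const _) hib,
        integral_const_mul, hdiff_mean v]
      have : (∫ ω, ⟪g x, Matrix.toEuclideanLin (S ω) v - v⟫ ∂μ) = 0 := by
        have he : (fun ω => ⟪g x, Matrix.toEuclideanLin (S ω) v - v⟫)
            = fun ω => ⟪g x, Matrix.toEuclideanLin (S ω) v⟫ - ⟪g x, v⟫ := by
          funext ω; rw [inner_sub_right]
        rw [he, integral_sub (hinner_int v (g x)) (integrable_const _),
          hinner_mean v (g x), integral_const]
        simp
      rw [this]
      simp
    rw [heval] at step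
    have hbd : (μD - 1) * μf / 2 * ‖v‖ ^ 2
        ≤ μf / 2 * ((∫ ω, ‖Matrix.toEuclideanLin (S ω) v‖ ^ 2 ∂μ) - ‖v‖ ^ 2) := by
      have := hμD v
      nlinarith [this, hμf.le]
    linarith
  refine ⟨hxstar xD, ?_⟩
  have h1 := hlower xD
  have h2 := hxD xstar
  have h3 := hupper xstar
  linarith
end

section
/- Suppose nonnegative sequences (δ_t)_{t≥0}, (r_t)_{t≥0} satisfy γ r_t ≤ (1 + γ² M₁) δ_t − δ_{t+1} + γ² M₂ for all t, with γ > 0 and M₁, M₂ ≥ 0. Define weights w_{−1} > 0, w_t = w_{t−1}/(1 + γ² M₁). Then for every T ≥ 1: Σ_{t=0}^{T−1} w_t r_t ≤ (w_{−1}/γ) δ_0 − (w_{T−1}/γ) δ_T + γ M₂ Σ_{t=0}^{T−1} w_t. -/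
open Finset

/-- If nonnegative sequences `(δ_t)`, `(r_t)` satisfy
`γ r_t ≤ (1 + γ² M₁) δ_t − δ_{t+1} + γ² M₂` for all `t`, and weights are defined by
`w_{-1} > 0`, `w_t = w_{t−1}/(1 + γ² M₁)`, then for every `T ≥ 1`:
`∑_{t<T} w_t r_t ≤ (w_{-1}/γ) δ_0 − (w_{T-1}/γ) δ_T + γ M₂ ∑_{t<T} w_t`. -/
theorem weighted_sum_lemma (γ M₁ M₂ : ℝ) (hγ : 0 < γ) (hM₁ : 0 ≤ M₁) (hM₂ : 0 ≤ M₂)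
    (δ r : ℕ → ℝ) (hδ : ∀ t, 0 ≤ δ t) (hr : ∀ t, 0 ≤ r t)
    (hrec : ∀ t, γ * r t ≤ (1 + γ ^ 2 * M₁) * δ t - δ (t + 1) + γ ^ 2 * M₂)
    (wpred : ℝ) (hwpred : 0 < wpred) (w : ℕ → ℝ)
    (hw0 : w 0 = wpred / (1 + γ ^ 2 * M₁))
    (hwrec : ∀ t, w (t + 1) = w t / (1 + γ ^ 2 * M₁)) :
    ∀ T : ℕ, 1 ≤ T →
      ∑ t ∈ Finset.range T, w t * r t ≤
        wpred / γ * δ 0 - w (T - 1) / γ * δ T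
          + γ * M₂ * ∑ t ∈ Finset.range T, w t := by
  have hA : (0:ℝ) < 1 + γ ^ 2 * M₁ := by positivity
  have hwpos : ∀ t, 0 < w t := by
    intro t
    induction t with
    | zero => rw [hw0]; positivity
    | succ n ih => rw [hwrec]; positivity
  have key : ∀ T : ℕ, 1 ≤ T →
      γ * ∑ t ∈ Finset.range T, w t * r t ≤
        wpred * δ 0 - w (T - 1) * δ T + γ ^ 2 * M₂ * ∑ t ∈ Finset.range T, w t := by
    intro T hT
    induction T with
    | zero => omega
    | succ n ih =>
      rcases Nat.eq_zero_or_pos n with hn | hn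
      · subst hn
        simp only [Nat.zero_add, Finset.sum_range_one]
        have hmul : w 0 * (1 + γ ^ 2 * M₁) = wpred := by
          rw [hw0]; field_simp
        have h2 := mul_le_mul_of_nonneg_left (hrec 0) (hwpos 0).le
        have h3 : w 0 * ((1 + γ ^ 2 * M₁) * δ 0) = wpred * δ 0 := by
          rw [← hmul]; ring
        norm_num
        nlinarith [h2, h3]
      · have hsum := ih hn
        obtain ⟨m, rfl⟩ : ∃ m, n = m + 1 := ⟨n - 1, by omega⟩
        have hmul : w (m + 1) * (1 + γ ^ 2 * M₁) = w m := by
          rw [hwrec]; field_simp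
        have h2 := mul_le_mul_of_nonneg_left (hrec (m + 1)) (hwpos (m + 1)).le
        rw [Finset.sum_range_succ (fun t => w t * r t), Finset.sum_range_succ w]
        simp only [Nat.add_sub_cancel] at hsum ⊢
        have h3 : w (m + 1) * ((1 + γ ^ 2 * M₁) * δ (m + 1)) = w m * δ (m + 1) := by
          rw [← hmul]; ring
        nlinarith [hsum, h2, h3]
  intro T hT
  have h := key T hT
  have hγ' : γ ≠ 0 := hγ.ne'
  rw [← mul_le_mul_iff_right₀ hγ]
  have e : γ * (wpred / γ * δ 0 - w (T - 1) / γ * δ T + γ * M₂ * ∑ t ∈ Finset.range T, w t)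
      = wpred * δ 0 - w (T - 1) * δ T + γ ^ 2 * M₂ * ∑ t ∈ Finset.range T, w t := by
    field_simp
  rw [e]; exact h
end
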